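/- arXiv:math/0102154 — 3 statements merged into one kernel-verified Lean document; each statement's English description precedes it below -/
import Mathlib

section
/- For a matrix A in SL(2,C) acting on the upper half-space model of hyperbolic 3-space, the hyperbolic distance from the point j = (0,0,1) to its image A·j satisfies ‖A‖² = 2·cosh(d(j, A·j)), where ‖A‖ is the Frobenius norm (square root of the sum of squares of absolute values of entries). -/
noncomputable section

abbrev SL2C := Matrix.SpecialLinearGroup (Fin 2) ℂ

/-- The embedding of ℂ into the quaternions (span of 1, i). -/
def cq (z : ℂ) : Quaternion ℝ := ⟨z.re, z.im, 0, 0⟩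

/-- The quaternion j, i.e. the point (0,0,1) of upper half-space. -/
def jq : Quaternion ℝ := ⟨0, 0, 1, 0⟩

/-- The Möbius action of SL(2,ℂ) on upper half-space: q ↦ (aq+b)(cq+d)⁻¹. -/
def moebAct (A : SL2C) (q : Quaternion ℝ) : Quaternion ℝ :=
  (cq (A.1 0 0) * q + cq (A.1 0 1)) * (cq (A.1 1 0) * q + cq (A.1 1 1))⁻¹

/-- The square of the Frobenius norm of A ∈ SL(2,ℂ). -/
def frobSq (A : SL2C) : ℝ :=
  ‖A.1 0 0‖ ^ 2 + ‖A.1 0 1‖ ^ 2 + ‖A.1 1 0‖ ^ 2 + ‖A.1 1 1‖ ^ 2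

/-- Inverse hyperbolic cosine (not yet in Mathlib). -/
def arccosh (x : ℝ) : ℝ := Real.log (x + Real.sqrt (x ^ 2 - 1))

/-- The hyperbolic distance in the upper half-space model
(points are quaternions a + bi + cj with c > 0, k-part 0). -/
def hypDist (p q : Quaternion ℝ) : ℝ :=
  arccosh (1 + ‖p - q‖ ^ 2 / (2 * p.imJ * q.imJ))

lemma cosh_arccosh {x : ℝ} (hx : 1 ≤ x) : Real.cosh (arccosh x) = x := by
  have h1 : 0 ≤ x ^ 2 - 1 := by nlinarith
  have hs : Real.sqrt (x ^ 2 - 1) ^ 2 = x ^ 2 - 1 := Real.sq_sqrt h1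
  have hsn : 0 ≤ Real.sqrt (x ^ 2 - 1) := Real.sqrt_nonneg _
  have hy : 0 < x + Real.sqrt (x ^ 2 - 1) := by nlinarith
  have hinv : (x + Real.sqrt (x ^ 2 - 1))⁻¹ = x - Real.sqrt (x ^ 2 - 1) := by
    apply inv_eq_of_mul_eq_one_right
    nlinarith
  rw [arccosh, Real.cosh_eq, Real.exp_log hy, Real.exp_neg, Real.exp_log hy, hinv]
  ring

lemma norm_sq_complex (z : ℂ) : ‖z‖ ^ 2 = z.re ^ 2 + z.im ^ 2 := by
  rw [Complex.sq_norm, Complex.normSq_apply]; ring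

set_option maxHeartbeats 1000000 in
/-- ‖A‖² = 2 cosh d(j, A·j) for every A ∈ SL(2,ℂ). -/
theorem frobSq_eq_two_cosh_dist (A : SL2C) :
    frobSq A = 2 * Real.cosh (hypDist jq (moebAct A jq)) := by
  set a := A.1 0 0 with ha
  set b := A.1 0 1 with hb
  set c := A.1 1 0 with hc
  set d := A.1 1 1 with hd
  have hdet : a * d - b * c = 1 := by
    have h := A.2
    rw [Matrix.det_fin_two] at h
    exact h
  have hre : a.re * d.re - a.im * d.im - (b.re * c.re - b.im * c.im) = 1 := by
    have := congrArg Complex.re hdet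
    simpa [Complex.mul_re] using this
  have him : a.re * d.im + a.im * d.re - (b.re * c.im + b.im * c.re) = 0 := by
    have := congrArg Complex.im hdet
    simpa [Complex.mul_im] using this
  set s : ℝ := c.re ^ 2 + c.im ^ 2 + d.re ^ 2 + d.im ^ 2 with hsdef
  have hs0 : 0 < s := by
    rcases (by positivity : (0:ℝ) ≤ s).lt_or_eq with h | h
    · exact h
    · exfalso
      have h1 : c.re = 0 := by nlinarith [sq_nonneg c.re, sq_nonneg c.im, sq_nonneg d.re, sq_nonneg d.im]
      have h2 : c.im = 0 := by nlinarith [sq_nonneg c.re, sq_nonneg c.im, sq_nonneg d.re, sq_nonneg d.im]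
      have h3 : d.re = 0 := by nlinarith [sq_nonneg c.re, sq_nonneg c.im, sq_nonneg d.re, sq_nonneg d.im]
      have h4 : d.im = 0 := by nlinarith [sq_nonneg c.re, sq_nonneg c.im, sq_nonneg d.re, sq_nonneg d.im]
      rw [h1, h2, h3, h4] at hre
      linarith
  have hsne : s ≠ 0 := ne_of_gt hs0
  set p : ℝ := a.re * c.re + a.im * c.im + b.re * d.re + b.im * d.im with hp
  set q : ℝ := a.im * c.re - a.re * c.im + b.im * d.re - b.re * d.im with hq
  set X : Quaternion ℝ := ⟨p / s, q / s, 1 / s, 0⟩ with hX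
  have hNval : (cq c * jq + cq d) = (⟨d.re, d.im, c.re, c.im⟩ : Quaternion ℝ) := by
    apply QuaternionAlgebra.ext <;>
      simp only [Quaternion.re_add, Quaternion.imI_add, Quaternion.imJ_add, Quaternion.imK_add, Quaternion.re_mul, Quaternion.imI_mul,
        Quaternion.imJ_mul, Quaternion.imK_mul] <;> simp [cq, jq]
  have hMval : (cq a * jq + cq b) = (⟨b.re, b.im, a.re, a.im⟩ : Quaternion ℝ) := by
    apply QuaternionAlgebra.ext <;>
      simp only [Quaternion.re_add, Quaternion.imI_add, Quaternion.imJ_add, Quaternion.imK_add, Quaternion.re_mul, Quaternion.imI_mul,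
        Quaternion.imJ_mul, Quaternion.imK_mul] <;> simp [cq, jq]
  have hNsq : Quaternion.normSq (⟨d.re, d.im, c.re, c.im⟩ : Quaternion ℝ) = s := by
    erw [Quaternion.normSq_def']
    ring
  have hNne : (⟨d.re, d.im, c.re, c.im⟩ : Quaternion ℝ) ≠ 0 := by
    intro h
    rw [h] at hNsq
    erw [map_zero] at hNsq
    exact hsne hNsq.symm
  have hact : moebAct A jq = X := by
    rw [moebAct, ← ha, ← hb, ← hc, ← hd, ← div_eq_mul_inv,
      div_eq_iff (by rw [hNval]; exact hNne)]
    apply QuaternionAlgebra.ext <;>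
      simp only [Quaternion.re_mul, Quaternion.imI_mul,
        Quaternion.imJ_mul, Quaternion.imK_mul] <;> simp only [hX, hNval, hMval]
    · field_simp
      linear_combination (-c.re) * hre + (-c.im) * him
    · field_simp
      linear_combination c.im * hre + (-c.re) * him
    · field_simp
      linear_combination d.re * hre + d.im * him
    · field_simp
      linear_combination (-d.im) * hre + d.re * him
  rw [hact, hypDist]
  have himJ : jq.imJ = 1 := rfl
  have hXimJ : X.imJ = 1 / s := rfl
  have hnorm : ‖jq - X‖ ^ 2 = (p / s) ^ 2 + (q / s) ^ 2 + (1 - 1 / s) ^ 2 := by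
    rw [sq, ← Quaternion.normSq_eq_norm_mul_self, Quaternion.normSq_def']
    simp only [Quaternion.re_sub, Quaternion.imI_sub, Quaternion.imJ_sub, Quaternion.imK_sub]
    simp [jq, hX]
  have harg : (1:ℝ) ≤ 1 + ‖jq - X‖ ^ 2 / (2 * jq.imJ * X.imJ) := by
    rw [himJ, hXimJ]
    have h2 : (0:ℝ) ≤ ‖jq - X‖ ^ 2 / (2 * 1 * (1 / s)) := by positivity
    linarith
  rw [cosh_arccosh harg, himJ, hXimJ, hnorm, frobSq]
  rw [← ha, ← hb, ← hc, ← hd, norm_sq_complex, norm_sq_complex, norm_sq_complex, norm_sq_complex]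
  have key : p ^ 2 + q ^ 2 = (a.re ^ 2 + a.im ^ 2 + b.re ^ 2 + b.im ^ 2) * s - 1 := by
    have h1 : (a.re * d.re - a.im * d.im - (b.re * c.re - b.im * c.im)) ^ 2
        + (a.re * d.im + a.im * d.re - (b.re * c.im + b.im * c.re)) ^ 2 = 1 := by
      rw [hre, him]; ring
    linear_combination -h1
  field_simp
  linear_combination (-1) * key + (-s) * hsdef
end
end

section
/- The map f : H³ → B³ defined on quaternions by f(w) = (w − j)(w + j)⁻¹ j, where H³ = {a + bi + cj : c > 0} and B³ = {a + bi + cj : a² + b² + c² < 1}, is a well-defined bijection from upper half-space to the open unit ball (in the span of 1, i, j in the quaternions), sending j to 0. -/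
noncomputable section

/-- Upper half-space: quaternions a + bi + cj with c > 0. -/
def upperHalfSpace : Set (Quaternion ℝ) := {q | q.imK = 0 ∧ 0 < q.imJ}

/-- The open unit ball in the span of 1, i, j. -/
def unitBall3 : Set (Quaternion ℝ) := {q | q.imK = 0 ∧ ‖q‖ < 1}

/-- The Cayley transform f(w) = (w − j)(w + j)⁻¹ j. -/
def cayley (w : Quaternion ℝ) : Quaternion ℝ := (w - jq) * (w + jq)⁻¹ * jq

lemma norm_lt_one_iff_normSq (a : Quaternion ℝ) : ‖a‖ < 1 ↔ Quaternion.normSq a < 1 := by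
  rw [Quaternion.normSq_eq_norm_mul_self]
  constructor
  · intro h; nlinarith [norm_nonneg a]
  · intro h; nlinarith [norm_nonneg a]

lemma cayley_formula (a b c : ℝ) (hc : 0 < c) :
    cayley ⟨a, b, c, 0⟩ =
      ⟨2*a / (a^2 + b^2 + (c+1)^2), 2*b / (a^2 + b^2 + (c+1)^2),
        (a^2 + b^2 + c^2 - 1) / (a^2 + b^2 + (c+1)^2), 0⟩ := by
  set w : Quaternion ℝ := ⟨a, b, c, 0⟩
  have hN : (0:ℝ) < a^2 + b^2 + (c+1)^2 := by positivity
  have hwj : w + jq ≠ 0 := by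
    intro h
    have : c + 1 = 0 := by
      have := congrArg QuaternionAlgebra.imJ h
      rw [Quaternion.imJ_add, Quaternion.imJ_zero] at this
      simpa [w, jq] using this
    linarith
  set v : Quaternion ℝ := ⟨2*a / (a^2 + b^2 + (c+1)^2), 2*b / (a^2 + b^2 + (c+1)^2),
        (a^2 + b^2 + c^2 - 1) / (a^2 + b^2 + (c+1)^2), 0⟩
  have key : v * (-jq) * (w + jq) = w - jq := by
    ext <;>
      simp only [Quaternion.re_mul, Quaternion.imI_mul, Quaternion.imJ_mul,
        Quaternion.imK_mul, Quaternion.re_add, Quaternion.imI_add, Quaternion.imJ_add,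
        Quaternion.imK_add, Quaternion.re_sub, Quaternion.imI_sub, Quaternion.imJ_sub,
        Quaternion.imK_sub, Quaternion.re_neg, Quaternion.imI_neg, Quaternion.imJ_neg,
        Quaternion.imK_neg] <;>
      simp only [v, w, jq] <;>
      field_simp <;> ring
  have hj : (-jq) * jq = 1 := by
    ext <;> simp [Quaternion.re_mul, Quaternion.imI_mul, Quaternion.imJ_mul,
      Quaternion.imK_mul, Quaternion.re_one, Quaternion.imI_one, Quaternion.imJ_one,
      Quaternion.imK_one] <;> simp [jq]
  calc cayley w = (w - jq) * (w + jq)⁻¹ * jq := rfl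
    _ = (v * (-jq) * (w + jq)) * (w + jq)⁻¹ * jq := by rw [key]
    _ = v * (-jq) * ((w + jq) * (w + jq)⁻¹) * jq := by rw [mul_assoc (v * (-jq))]
    _ = v := by rw [mul_inv_cancel₀ hwj, mul_one, mul_assoc, hj, mul_one]

/-- explicit inverse -/
def invCayley (z : Quaternion ℝ) : Quaternion ℝ :=
  ⟨2*z.re / (z.re^2 + z.imI^2 + (1 - z.imJ)^2),
   2*z.imI / (z.re^2 + z.imI^2 + (1 - z.imJ)^2),
   (1 - z.re^2 - z.imI^2 - z.imJ^2) / (z.re^2 + z.imI^2 + (1 - z.imJ)^2), 0⟩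

/-- The map f(w) = (w − j)(w + j)⁻¹ j is well defined (w + j is invertible on
H³) and is a bijection from upper half-space onto the open unit ball in the
span of 1, i, j, sending j to 0. -/
theorem cayley_bijOn :
    (∀ w ∈ upperHalfSpace, w + jq ≠ 0) ∧
    Set.BijOn cayley upperHalfSpace unitBall3 ∧
    cayley jq = 0 := by
  have hne : ∀ w ∈ upperHalfSpace, w + jq ≠ 0 := by
    intro w hw h
    have := congrArg QuaternionAlgebra.imJ h
    rw [Quaternion.imJ_add, Quaternion.imJ_zero] at this
    simp [jq] at this
    have := hw.2
    linarith
  refine ⟨hne, ?_, ?_⟩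
  · have hmaps : Set.MapsTo cayley upperHalfSpace unitBall3 := by
      rintro w ⟨hk, hj⟩
      obtain ⟨a, b, c, k⟩ := w
      simp only [upperHalfSpace, Set.mem_setOf_eq] at hk hj ⊢
      subst hk
      rw [cayley_formula a b c hj]
      have hN : (0:ℝ) < a^2 + b^2 + (c+1)^2 := by positivity
      refine ⟨rfl, ?_⟩
      refine (norm_lt_one_iff_normSq _).2 (lt_of_eq_of_lt (Quaternion.normSq_def' _) ?_)
      have h1 : (2*a / (a^2 + b^2 + (c+1)^2))^2 + (2*b / (a^2 + b^2 + (c+1)^2))^2 +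
          ((a^2 + b^2 + c^2 - 1) / (a^2 + b^2 + (c+1)^2))^2 + 0^2 < 1 := by
        rw [div_pow, div_pow, div_pow, ← add_div, ← add_div]
        rw [div_add' _ _ _ (by positivity), div_lt_one (by positivity)]
        nlinarith [sq_nonneg a, sq_nonneg b, sq_nonneg (a^2+b^2+c^2+1), mul_pos hj hN]
      simpa using h1
    have hmaps' : Set.MapsTo invCayley unitBall3 upperHalfSpace := by
      rintro z ⟨hk, hz⟩
      rw [norm_lt_one_iff_normSq, Quaternion.normSq_def', hk] at hz
      set x := z.re; set y := z.imI; set t := z.imJ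
      have hR : x^2 + y^2 + t^2 < 1 := by nlinarith
      have ht : t < 1 := by nlinarith [sq_nonneg x, sq_nonneg y]
      have hM : (0:ℝ) < x^2 + y^2 + (1-t)^2 := by
        nlinarith [sq_nonneg x, sq_nonneg y, mul_pos (sub_pos.mpr ht) (sub_pos.mpr ht)]
      refine ⟨rfl, ?_⟩
      dsimp [invCayley]
      exact div_pos (by nlinarith) hM
    have hleft : Set.LeftInvOn invCayley cayley upperHalfSpace := by
      rintro w ⟨hk, hj⟩
      obtain ⟨a, b, c, k⟩ := w
      simp only [upperHalfSpace, Set.mem_setOf_eq] at hk hj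
      subst hk
      rw [cayley_formula a b c hj]
      have hN : (0:ℝ) < a^2 + b^2 + (c+1)^2 := by positivity
      have hM : (2*a / (a^2 + b^2 + (c+1)^2))^2 + (2*b / (a^2 + b^2 + (c+1)^2))^2 +
          (1 - (a^2 + b^2 + c^2 - 1) / (a^2 + b^2 + (c+1)^2))^2
          = 4 / (a^2 + b^2 + (c+1)^2) := by
        field_simp
        ring
      ext <;> simp only [invCayley] <;> rw [hM] <;> field_simp <;> ring
    have hright : Set.RightInvOn invCayley cayley unitBall3 := by
      rintro z ⟨hk, hz⟩
      rw [norm_lt_one_iff_normSq, Quaternion.normSq_def', hk] at hz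
      set x := z.re; set y := z.imI; set t := z.imJ
      have hR : x^2 + y^2 + t^2 < 1 := by nlinarith
      have ht : t < 1 := by nlinarith [sq_nonneg x, sq_nonneg y]
      have hM : (0:ℝ) < x^2 + y^2 + (1-t)^2 := by
        nlinarith [sq_nonneg x, sq_nonneg y, mul_pos (sub_pos.mpr ht) (sub_pos.mpr ht)]
      have hinv : invCayley z =
          ⟨2*x / (x^2 + y^2 + (1-t)^2), 2*y / (x^2 + y^2 + (1-t)^2),
           (1 - x^2 - y^2 - t^2) / (x^2 + y^2 + (1-t)^2), 0⟩ := rfl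
      rw [hinv, cayley_formula _ _ _ (by
        apply div_pos (by nlinarith) hM)]
      have hN : (2*x / (x^2 + y^2 + (1-t)^2))^2 + (2*y / (x^2 + y^2 + (1-t)^2))^2 +
          ((1 - x^2 - y^2 - t^2) / (x^2 + y^2 + (1-t)^2) + 1)^2
          = 4 / (x^2 + y^2 + (1-t)^2) := by
        field_simp
        ring
      ext
      · rw [hN]; field_simp; ring
      · rw [hN]; field_simp; ring
      · rw [hN]; field_simp; ring
      · exact hk.symm
    exact Set.InvOn.bijOn ⟨hleft, hright⟩ hmaps hmaps'
  · have : jq - jq = 0 := sub_self jq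
    simp [cayley, this]
end
end

section
/- If ‖A‖² < 2 + 2⁻⁵⁸ for A ∈ SL(2,C), then the hyperbolic distance moved by the point j under the action of A satisfies d(j, A·j) = arccosh(‖A‖²/2) < 0.49/(16·(2·(4π/0.49)³ + 1)). -/
noncomputable section

set_option maxHeartbeats 1600000 in
open Real in
/-- If ‖A‖² < 2 + 2⁻⁵⁸ then d(j, A·j) = arccosh(‖A‖²/2) is smaller than the
Margulis constant 0.49/(16·(2·(4π/0.49)³ + 1)). -/
theorem dist_lt_margulis_of_frobSq_small (A : SL2C)
    (h : frobSq A < 2 + 2 ^ (-58 : ℤ)) :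
    hypDist jq (moebAct A jq) = arccosh (frobSq A / 2) ∧
    hypDist jq (moebAct A jq) <
      0.49 / (16 * (2 * (4 * π / 0.49) ^ 3 + 1)) := by
  set a := A.1 0 0 with ha
  set b := A.1 0 1 with hb
  set c := A.1 1 0 with hc
  set d := A.1 1 1 with hd
  have hdet : a * d - b * c = 1 := by
    have h2 := A.2
    rw [Matrix.det_fin_two] at h2
    exact h2
  have h1 : a.re * d.re - a.im * d.im - b.re * c.re + b.im * c.im = 1 := by
    have := congrArg Complex.re hdet
    simp only [Complex.sub_re, Complex.mul_re, Complex.one_re] at this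
    linarith
  have h2 : a.re * d.im + a.im * d.re - b.re * c.im - b.im * c.re = 0 := by
    have := congrArg Complex.im hdet
    simp only [Complex.sub_im, Complex.mul_im, Complex.one_im] at this
    linarith
  set N : ℝ := c.re ^ 2 + c.im ^ 2 + d.re ^ 2 + d.im ^ 2 with hNdef
  have hN : 0 < N := by
    rcases lt_or_ge 0 N with h' | h'
    · exact h'
    · exfalso
      have hcr : c.re = 0 := by
        have : c.re ^ 2 = 0 := le_antisymm (by nlinarith [sq_nonneg c.im, sq_nonneg d.re, sq_nonneg d.im]) (sq_nonneg _)
        exact (pow_eq_zero_iff two_ne_zero).mp this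
      have hci : c.im = 0 := by
        have : c.im ^ 2 = 0 := le_antisymm (by nlinarith [sq_nonneg c.re, sq_nonneg d.re, sq_nonneg d.im]) (sq_nonneg _)
        exact (pow_eq_zero_iff two_ne_zero).mp this
      have hdr : d.re = 0 := by
        have : d.re ^ 2 = 0 := le_antisymm (by nlinarith [sq_nonneg c.re, sq_nonneg c.im, sq_nonneg d.im]) (sq_nonneg _)
        exact (pow_eq_zero_iff two_ne_zero).mp this
      have hdi : d.im = 0 := by
        have : d.im ^ 2 = 0 := le_antisymm (by nlinarith [sq_nonneg c.re, sq_nonneg c.im, sq_nonneg d.re]) (sq_nonneg _)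
        exact (pow_eq_zero_iff two_ne_zero).mp this
      rw [hcr, hci, hdr, hdi] at h1
      norm_num at h1
  have hNne : N ≠ 0 := ne_of_gt hN
  set P : ℝ := b.re * d.re + b.im * d.im + a.re * c.re + a.im * c.im with hP
  set Q : ℝ := b.im * d.re - b.re * d.im + a.im * c.re - a.re * c.im with hQ
  -- compute the Möbius image of j
  have hq : moebAct A jq = (⟨P / N, Q / N, 1 / N, 0⟩ : Quaternion ℝ) := by
    rw [moebAct, ← ha, ← hb, ← hc, ← hd]
    have e1 : (cq a * jq + cq b : Quaternion ℝ) = ⟨b.re, b.im, a.re, a.im⟩ := by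
      ext <;> simp [Quaternion.re_mul, Quaternion.imI_mul, Quaternion.imJ_mul,
        Quaternion.imK_mul] <;> simp [cq, jq]
    have e2 : (cq c * jq + cq d : Quaternion ℝ) = ⟨d.re, d.im, c.re, c.im⟩ := by
      ext <;> simp [Quaternion.re_mul, Quaternion.imI_mul, Quaternion.imJ_mul,
        Quaternion.imK_mul] <;> simp [cq, jq]
    rw [Quaternion.inv_def, e1, e2]
    have hns : Quaternion.normSq (⟨d.re, d.im, c.re, c.im⟩ : Quaternion ℝ) = N := by
      erw [Quaternion.normSq_def']
      show d.re ^ 2 + d.im ^ 2 + c.re ^ 2 + c.im ^ 2 = N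
      rw [hNdef]; ring
    rw [hns]
    have hstar : star (⟨d.re, d.im, c.re, c.im⟩ : Quaternion ℝ) = ⟨d.re, -d.im, -c.re, -c.im⟩ := by
      ext <;> simp
    erw [hstar]
    ext
    · show (⟨b.re, b.im, a.re, a.im⟩ * (N⁻¹ • ⟨d.re, -d.im, -c.re, -c.im⟩) : Quaternion ℝ).re = P / N
      erw [Quaternion.re_mul]
      simp only [Quaternion.re_smul, Quaternion.imI_smul, Quaternion.imJ_smul, Quaternion.imK_smul,
        smul_eq_mul]
      show b.re * (N⁻¹ * d.re) - b.im * (N⁻¹ * -d.im) - a.re * (N⁻¹ * -c.re) - a.im * (N⁻¹ * -c.im) = P / N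
      field_simp [hNne, hP]; try ring
    · show (⟨b.re, b.im, a.re, a.im⟩ * (N⁻¹ • ⟨d.re, -d.im, -c.re, -c.im⟩) : Quaternion ℝ).imI = Q / N
      erw [Quaternion.imI_mul]
      simp only [Quaternion.re_smul, Quaternion.imI_smul, Quaternion.imJ_smul, Quaternion.imK_smul,
        smul_eq_mul]
      show b.re * (N⁻¹ * -d.im) + b.im * (N⁻¹ * d.re) + a.re * (N⁻¹ * -c.im) - a.im * (N⁻¹ * -c.re) = Q / N
      field_simp [hNne, hQ]; try ring
    · show (⟨b.re, b.im, a.re, a.im⟩ * (N⁻¹ • ⟨d.re, -d.im, -c.re, -c.im⟩) : Quaternion ℝ).imJ = 1 / N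
      erw [Quaternion.imJ_mul]
      simp only [Quaternion.re_smul, Quaternion.imI_smul, Quaternion.imJ_smul, Quaternion.imK_smul,
        smul_eq_mul]
      show b.re * (N⁻¹ * -c.re) - b.im * (N⁻¹ * -c.im) + a.re * (N⁻¹ * d.re) + a.im * (N⁻¹ * -d.im) = 1 / N
      have : b.re * (N⁻¹ * -c.re) - b.im * (N⁻¹ * -c.im) + a.re * (N⁻¹ * d.re) + a.im * (N⁻¹ * -d.im)
          = (a.re * d.re - a.im * d.im - b.re * c.re + b.im * c.im) / N := by
        field_simp
        ring
      rw [this, h1]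
    · show (⟨b.re, b.im, a.re, a.im⟩ * (N⁻¹ • ⟨d.re, -d.im, -c.re, -c.im⟩) : Quaternion ℝ).imK = 0
      erw [Quaternion.imK_mul]
      simp only [Quaternion.re_smul, Quaternion.imI_smul, Quaternion.imJ_smul, Quaternion.imK_smul,
        smul_eq_mul]
      show b.re * (N⁻¹ * -c.im) + b.im * (N⁻¹ * -c.re) - a.re * (N⁻¹ * -d.im) + a.im * (N⁻¹ * d.re) = 0
      have : b.re * (N⁻¹ * -c.im) + b.im * (N⁻¹ * -c.re) - a.re * (N⁻¹ * -d.im) + a.im * (N⁻¹ * d.re)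
          = (a.re * d.im + a.im * d.re - b.re * c.im - b.im * c.re) / N := by
        field_simp
        ring
      rw [this, h2, zero_div]
  -- the squared norm of the displacement
  have hdiff : jq - moebAct A jq = (⟨-(P / N), -(Q / N), 1 - 1 / N, 0⟩ : Quaternion ℝ) := by
    ext <;> simp only [Quaternion.re_sub, Quaternion.imI_sub, Quaternion.imJ_sub, Quaternion.imK_sub] <;> simp [hq] <;> simp [jq]
  have hnorm : ‖jq - moebAct A jq‖ ^ 2 = (P / N) ^ 2 + (Q / N) ^ 2 + (1 - 1 / N) ^ 2 := by
    rw [sq, ← Quaternion.normSq_eq_norm_mul_self, Quaternion.normSq_def', hdiff]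
    show (-(P / N)) ^ 2 + (-(Q / N)) ^ 2 + (1 - 1 / N) ^ 2 + 0 ^ 2 = _
    ring
  -- the Frobenius norm squared expressed in components
  have hfrob : frobSq A = a.re ^ 2 + a.im ^ 2 + b.re ^ 2 + b.im ^ 2 + N := by
    rw [frobSq, ← ha, ← hb, ← hc, ← hd, hNdef]
    simp only [Complex.sq_norm, Complex.normSq_apply]
    ring
  -- the key cosh identity
  have key : 1 + ‖jq - moebAct A jq‖ ^ 2 / (2 * jq.imJ * (moebAct A jq).imJ) = frobSq A / 2 := by
    have hjJ : jq.imJ = 1 := rfl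
    have hqJ : (moebAct A jq).imJ = 1 / N := by rw [hq]
    rw [hnorm, hjJ, hqJ, hfrob]
    have hPQ : P ^ 2 + Q ^ 2 = (a.re ^ 2 + a.im ^ 2 + b.re ^ 2 + b.im ^ 2) * N - 1 := by
      have h12 : (a.re * d.re - a.im * d.im - b.re * c.re + b.im * c.im) ^ 2 +
          (a.re * d.im + a.im * d.re - b.re * c.im - b.im * c.re) ^ 2 = 1 := by
        rw [h1, h2]; norm_num
      rw [hP, hQ, hNdef]
      nlinarith [h12]
    field_simp
    nlinarith [hPQ, hN]
  have hmain : hypDist jq (moebAct A jq) = arccosh (frobSq A / 2) := by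
    rw [hypDist, key]
  refine ⟨hmain, ?_⟩
  rw [hmain]
  have he : (2:ℝ) ^ (-58 : ℤ) = 2 / 576460752303423488 := by norm_num
  rw [he] at h
  set x : ℝ := frobSq A / 2 with hx
  have hx1 : 1 ≤ x := by
    rw [hx, hfrob, hNdef]
    nlinarith [h1, sq_nonneg (a.re - d.re), sq_nonneg (a.im + d.im), sq_nonneg (b.re + c.re),
      sq_nonneg (b.im - c.im)]
  have hxlt : x < 1 + 1 / 576460752303423488 := by
    rw [hx]; linarith
  have hsqrt : Real.sqrt (x ^ 2 - 1) ≤ 3e-9 := by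
    have hle : x ^ 2 - 1 ≤ (3e-9 : ℝ) ^ 2 := by nlinarith [hx1, hxlt]
    calc Real.sqrt (x ^ 2 - 1) ≤ Real.sqrt ((3e-9 : ℝ) ^ 2) := Real.sqrt_le_sqrt hle
      _ = 3e-9 := Real.sqrt_sq (by norm_num)
  have hlog : arccosh x ≤ x + Real.sqrt (x ^ 2 - 1) - 1 := by
    rw [arccosh]
    refine Real.log_le_sub_one_of_pos ?_
    have : (0:ℝ) ≤ Real.sqrt (x ^ 2 - 1) := Real.sqrt_nonneg _
    linarith
  have hbound : arccosh x ≤ 1 / 576460752303423488 + 3e-9 := by linarith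
  have hpi : π < 3.15 := Real.pi_lt_d2
  have hpi0 : 0 < π := Real.pi_pos
  have hrhs : (0.49 : ℝ) / (16 * (2 * (4 * 3.15 / 0.49) ^ 3 + 1)) ≤
      0.49 / (16 * (2 * (4 * π / 0.49) ^ 3 + 1)) := by
    apply div_le_div_of_nonneg_left (by norm_num) (by positivity)
    have h49 : (0:ℝ) < 0.49 := by norm_num
    have : (4 * π / 0.49) ^ 3 ≤ (4 * 3.15 / 0.49) ^ 3 := by
      exact pow_le_pow_left₀ (by positivity) ((div_le_div_iff_of_pos_right (by norm_num)).mpr (by linarith)) 3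
    linarith
  have hnum : (1:ℝ) / 576460752303423488 + 3e-9 <
      0.49 / (16 * (2 * (4 * 3.15 / 0.49) ^ 3 + 1)) := by norm_num
  linarith
end
end
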